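/- Let σ be a permutation of Fin n, i < j with σ(i) < σ(j), τ = σ ∘ (i j), and suppose the rectangle is empty of interior dots: there is no k with i < k < j and σ(i) < σ(k) < σ(j). Let B ⊆ ℤ² be a finite set of points with both coordinates odd, x_σ = {(2l, 2σ(l))}, x_τ = {(2l, 2τ(l))}, and define the Maslov grading M_B(A) := J(A,A) − 2·J(A,B) + J(B,B) + 1. Then M_B(x_σ) − M_B(x_τ) = 1 − 2·#{b ∈ B : 2i < b₁ < 2j and 2σ(i) < b₂ < 2σ(j)}. -/

import Mathlib

/-- `2·J(A,B)` is the number of pairs `(a,b) ∈ A × B` with `(b₁-a₁)(b₂-a₂) > 0`. -/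
def J (A B : Finset (ℤ × ℤ)) : ℚ :=
  (((A ×ˢ B).filter (fun p => 0 < (p.2.1 - p.1.1) * (p.2.2 - p.1.2))).card : ℚ) / 2

/-- The Maslov grading `M_B(A) = J(A,A) - 2J(A,B) + J(B,B) + 1`. -/
def M (B A : Finset (ℤ × ℤ)) : ℚ := J A A - 2 * J A B + J B B + 1

/-- The set of dots of the generator associated to `σ`: `{(2l, 2σ(l)) : l ∈ Fin n}`. -/
def dots {n : ℕ} (σ : Equiv.Perm (Fin n)) : Finset (ℤ × ℤ) :=
  Finset.univ.image (fun l : Fin n => (2 * ((l : ℕ) : ℤ), 2 * ((σ l : ℕ) : ℤ)))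

def indQ (a b : ℤ × ℤ) : ℚ := if 0 < (b.1 - a.1) * (b.2 - a.2) then 1 else 0

def pt {n : ℕ} (σ : Equiv.Perm (Fin n)) (l : Fin n) : ℤ × ℤ :=
  (2 * ((l : ℕ) : ℤ), 2 * ((σ l : ℕ) : ℤ))

lemma indQ_comm (a b : ℤ × ℤ) : indQ a b = indQ b a := by
  unfold indQ
  rw [show (b.1 - a.1) * (b.2 - a.2) = (a.1 - b.1) * (a.2 - b.2) by ring]

lemma J_eq (A B : Finset (ℤ × ℤ)) : J A B = (∑ a ∈ A, ∑ b ∈ B, indQ a b) / 2 := by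
  unfold J indQ
  rw [Finset.card_filter]
  push_cast
  rw [Finset.sum_product]

lemma sum_dots {n : ℕ} (σ : Equiv.Perm (Fin n)) (F : ℤ × ℤ → ℚ) :
    ∑ a ∈ dots σ, F a = ∑ l : Fin n, F (pt σ l) := by
  unfold dots
  rw [Finset.sum_image]
  · rfl
  · intro k _ l _ h
    have h1 : 2 * ((k : ℕ) : ℤ) = 2 * ((l : ℕ) : ℤ) := congrArg Prod.fst h
    exact Fin.ext (by omega)

lemma cdiff (a b c d x y : ℤ) (hab : a < b) (hcd : c < d)
    (hxa : x ≠ a) (hxb : x ≠ b) (hyc : y ≠ c) (hyd : y ≠ d) :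
    ((if 0 < (x - a) * (y - c) then (1:ℚ) else 0) + (if 0 < (x - b) * (y - d) then (1:ℚ) else 0))
      - ((if 0 < (x - a) * (y - d) then (1:ℚ) else 0) + (if 0 < (x - b) * (y - c) then (1:ℚ) else 0))
    = if a < x ∧ x < b ∧ c < y ∧ y < d then 2 else 0 := by
  simp only [mul_pos_iff, sub_pos, sub_neg]
  split_ifs <;> norm_num <;> omega


/-- For an empty rectangle move (`i < j`, `σ i < σ j`, no interior dot),
`M_B(x_σ) - M_B(x_τ) = 1 - 2·#(B ∩ rectangle)`. -/
theorem maslov_empty_rectangle (n : ℕ) (σ : Equiv.Perm (Fin n)) (i j : Fin n)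
    (hij : i < j) (hσ : σ i < σ j)
    (hempty : ¬ ∃ k : Fin n, i < k ∧ k < j ∧ σ i < σ k ∧ σ k < σ j)
    (B : Finset (ℤ × ℤ)) (hB : ∀ b ∈ B, Odd b.1 ∧ Odd b.2) :
    M B (dots σ) - M B (dots (σ * Equiv.swap i j))
      = 1 - 2 * ((B.filter (fun b => 2 * ((i : ℕ) : ℤ) < b.1 ∧ b.1 < 2 * ((j : ℕ) : ℤ) ∧
          2 * ((σ i : ℕ) : ℤ) < b.2 ∧ b.2 < 2 * ((σ j : ℕ) : ℤ))).card : ℚ) := by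
  classical
  set τ := σ * Equiv.swap i j with hτdef
  have hne : i ≠ j := ne_of_lt hij
  have hτi : τ i = σ j := by simp [hτdef, Equiv.Perm.mul_apply]
  have hτj : τ j = σ i := by simp [hτdef, Equiv.Perm.mul_apply]
  have hτk : ∀ k : Fin n, k ≠ i → k ≠ j → τ k = σ k := by
    intro k h1 h2
    simp [hτdef, Equiv.Perm.mul_apply, Equiv.swap_apply_of_ne_of_ne h1 h2]
  have hptk : ∀ k : Fin n, k ≠ i → k ≠ j → pt τ k = pt σ k := by
    intro k h1 h2; simp [pt, hτk k h1 h2]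
  have hpti : pt τ i = (2 * ((i : ℕ) : ℤ), 2 * ((σ j : ℕ) : ℤ)) := by simp [pt, hτi]
  have hptj : pt τ j = (2 * ((j : ℕ) : ℤ), 2 * ((σ i : ℕ) : ℤ)) := by simp [pt, hτj]
  have hijN : (i : ℕ) < (j : ℕ) := hij
  have hσN : (σ i : ℕ) < (σ j : ℕ) := hσ
  have hab : 2 * ((i : ℕ) : ℤ) < 2 * ((j : ℕ) : ℤ) := by omega
  have hcd : 2 * ((σ i : ℕ) : ℤ) < 2 * ((σ j : ℕ) : ℤ) := by omega
  have hrect0 : ∀ k : Fin n, k ≠ i → k ≠ j →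
      ¬(2 * ((i : ℕ) : ℤ) < 2 * ((k : ℕ) : ℤ) ∧ 2 * ((k : ℕ) : ℤ) < 2 * ((j : ℕ) : ℤ) ∧
        2 * ((σ i : ℕ) : ℤ) < 2 * ((σ k : ℕ) : ℤ) ∧ 2 * ((σ k : ℕ) : ℤ) < 2 * ((σ j : ℕ) : ℤ)) := by
    rintro k _ _ ⟨h1, h2, h3, h4⟩
    exact hempty ⟨k, Fin.lt_def.mpr (by omega), Fin.lt_def.mpr (by omega),
      Fin.lt_def.mpr (by omega), Fin.lt_def.mpr (by omega)⟩
  have hkval : ∀ k : Fin n, k ≠ i → k ≠ j →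
      2 * ((k : ℕ) : ℤ) ≠ 2 * ((i : ℕ) : ℤ) ∧ 2 * ((k : ℕ) : ℤ) ≠ 2 * ((j : ℕ) : ℤ) ∧
      2 * ((σ k : ℕ) : ℤ) ≠ 2 * ((σ i : ℕ) : ℤ) ∧ 2 * ((σ k : ℕ) : ℤ) ≠ 2 * ((σ j : ℕ) : ℤ) := by
    intro k h1 h2
    have e1 : (k : ℕ) ≠ (i : ℕ) := fun h => h1 (Fin.ext h)
    have e2 : (k : ℕ) ≠ (j : ℕ) := fun h => h2 (Fin.ext h)
    have e3 : (σ k : ℕ) ≠ (σ i : ℕ) := fun h => h1 (σ.injective (Fin.ext h))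
    have e4 : (σ k : ℕ) ≠ (σ j : ℕ) := fun h => h2 (σ.injective (Fin.ext h))
    refine ⟨by omega, by omega, by omega, by omega⟩
  -- Part 1: interaction with B
  have keyB : ∀ b ∈ B,
      (∑ l : Fin n, indQ (pt σ l) b) - (∑ l : Fin n, indQ (pt τ l) b)
      = if 2 * ((i : ℕ) : ℤ) < b.1 ∧ b.1 < 2 * ((j : ℕ) : ℤ) ∧
          2 * ((σ i : ℕ) : ℤ) < b.2 ∧ b.2 < 2 * ((σ j : ℕ) : ℤ) then (2:ℚ) else 0 := by
    intro b hb
    obtain ⟨m1, hm1⟩ := (hB b hb).1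
    obtain ⟨m2, hm2⟩ := (hB b hb).2
    rw [← Finset.sum_sub_distrib]
    rw [← Finset.sum_subset (Finset.subset_univ ({i, j} : Finset (Fin n)))
      (by
        intro k _ hk
        simp only [Finset.mem_insert, Finset.mem_singleton] at hk
        push_neg at hk
        rw [hptk k hk.1 hk.2, sub_self])]
    rw [Finset.sum_pair hne]
    have h := cdiff (2 * ((i : ℕ) : ℤ)) (2 * ((j : ℕ) : ℤ)) (2 * ((σ i : ℕ) : ℤ))
      (2 * ((σ j : ℕ) : ℤ)) b.1 b.2 hab hcd (by omega) (by omega) (by omega) (by omega)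
    rw [hpti, hptj]
    unfold indQ pt
    linear_combination h
  -- Part 2: self pairing
  have keySelf :
      (∑ k : Fin n, ∑ l : Fin n, indQ (pt σ k) (pt σ l))
        - (∑ k : Fin n, ∑ l : Fin n, indQ (pt τ k) (pt τ l)) = 2 := by
    rw [← Finset.sum_sub_distrib]
    have hrow : ∀ k : Fin n,
        (∑ l : Fin n, indQ (pt σ k) (pt σ l)) - (∑ l : Fin n, indQ (pt τ k) (pt τ l))
        = ∑ l : Fin n, (indQ (pt σ k) (pt σ l) - indQ (pt τ k) (pt τ l)) := by
      intro k; rw [Finset.sum_sub_distrib]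
    simp only [hrow]
    rw [← Finset.sum_subset (Finset.subset_univ ({i, j} : Finset (Fin n)))
      (by
        intro k _ hk
        simp only [Finset.mem_insert, Finset.mem_singleton] at hk
        push_neg at hk
        -- row k is zero
        rw [← Finset.sum_subset (Finset.subset_univ ({i, j} : Finset (Fin n)))
          (by
            intro l _ hl
            simp only [Finset.mem_insert, Finset.mem_singleton] at hl
            push_neg at hl
            rw [hptk k hk.1 hk.2, hptk l hl.1 hl.2, sub_self])]
        rw [Finset.sum_pair hne]
        obtain ⟨e1, e2, e3, e4⟩ := hkval k hk.1 hk.2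
        have h := cdiff (2 * ((i : ℕ) : ℤ)) (2 * ((j : ℕ) : ℤ)) (2 * ((σ i : ℕ) : ℤ))
          (2 * ((σ j : ℕ) : ℤ)) (2 * ((k : ℕ) : ℤ)) (2 * ((σ k : ℕ) : ℤ)) hab hcd e1 e2 e3 e4
        rw [if_neg (hrect0 k hk.1 hk.2)] at h
        rw [hptk k hk.1 hk.2, hpti, hptj]
        rw [indQ_comm (pt σ k) (pt σ i), indQ_comm (pt σ k) (pt σ j),
            indQ_comm (pt σ k) (2 * ((i : ℕ) : ℤ), 2 * ((σ j : ℕ) : ℤ)),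
            indQ_comm (pt σ k) (2 * ((j : ℕ) : ℤ), 2 * ((σ i : ℕ) : ℤ))]
        unfold indQ pt
        linear_combination h)]
    rw [Finset.sum_pair hne, ← Finset.sum_add_distrib]
    rw [← Finset.sum_subset (Finset.subset_univ ({i, j} : Finset (Fin n)))
      (by
        intro l _ hl
        simp only [Finset.mem_insert, Finset.mem_singleton] at hl
        push_neg at hl
        obtain ⟨e1, e2, e3, e4⟩ := hkval l hl.1 hl.2
        have h := cdiff (2 * ((i : ℕ) : ℤ)) (2 * ((j : ℕ) : ℤ)) (2 * ((σ i : ℕ) : ℤ))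
          (2 * ((σ j : ℕ) : ℤ)) (2 * ((l : ℕ) : ℤ)) (2 * ((σ l : ℕ) : ℤ)) hab hcd e1 e2 e3 e4
        rw [if_neg (hrect0 l hl.1 hl.2)] at h
        rw [hptk l hl.1 hl.2, hpti, hptj]
        unfold indQ pt
        linear_combination h)]
    rw [Finset.sum_pair hne]
    rw [hpti, hptj]
    have hval1 : ∀ (P Q : ℤ × ℤ), 0 < (Q.1 - P.1) * (Q.2 - P.2) → indQ P Q = 1 :=
      fun P Q h => if_pos h
    have hval0 : ∀ (P Q : ℤ × ℤ), ¬ 0 < (Q.1 - P.1) * (Q.2 - P.2) → indQ P Q = 0 :=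
      fun P Q h => if_neg h
    have z3 : ∀ P : ℤ × ℤ, indQ P P = 0 := fun P => by simp [indQ]
    have o1 : indQ (pt σ j) (pt σ i) = 1 := by
      refine hval1 _ _ ?_
      show (0:ℤ) < (2 * ((i : ℕ) : ℤ) - 2 * ((j : ℕ) : ℤ)) *
        (2 * ((σ i : ℕ) : ℤ) - 2 * ((σ j : ℕ) : ℤ))
      exact mul_pos_of_neg_of_neg (by omega) (by omega)
    have o2 : indQ (pt σ i) (pt σ j) = 1 := by
      refine hval1 _ _ ?_
      show (0:ℤ) < (2 * ((j : ℕ) : ℤ) - 2 * ((i : ℕ) : ℤ)) *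
        (2 * ((σ j : ℕ) : ℤ) - 2 * ((σ i : ℕ) : ℤ))
      exact mul_pos (by omega) (by omega)
    have n1 : indQ ((2 * ((j : ℕ) : ℤ), 2 * ((σ i : ℕ) : ℤ)))
        ((2 * ((i : ℕ) : ℤ), 2 * ((σ j : ℕ) : ℤ))) = 0 := by
      refine hval0 _ _ ?_
      show ¬ (0:ℤ) < (2 * ((i : ℕ) : ℤ) - 2 * ((j : ℕ) : ℤ)) *
        (2 * ((σ j : ℕ) : ℤ) - 2 * ((σ i : ℕ) : ℤ))
      exact not_lt.mpr (le_of_lt (mul_neg_of_neg_of_pos (by omega) (by omega)))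
    have n2 : indQ ((2 * ((i : ℕ) : ℤ), 2 * ((σ j : ℕ) : ℤ)))
        ((2 * ((j : ℕ) : ℤ), 2 * ((σ i : ℕ) : ℤ))) = 0 := by
      refine hval0 _ _ ?_
      show ¬ (0:ℤ) < (2 * ((j : ℕ) : ℤ) - 2 * ((i : ℕ) : ℤ)) *
        (2 * ((σ i : ℕ) : ℤ) - 2 * ((σ j : ℕ) : ℤ))
      exact not_lt.mpr (le_of_lt (mul_neg_of_pos_of_neg (by omega) (by omega)))
    rw [z3, z3, z3, z3, o1, o2, n1, n2]
    norm_num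
  -- Assembly
  have e1 : J (dots σ) (dots σ) = (∑ k : Fin n, ∑ l : Fin n, indQ (pt σ k) (pt σ l)) / 2 := by
    rw [J_eq, sum_dots σ (fun a => ∑ b ∈ dots σ, indQ a b)]
    congr 1
    exact Finset.sum_congr rfl fun k _ => sum_dots σ (fun b => indQ (pt σ k) b)
  have e2 : J (dots τ) (dots τ) = (∑ k : Fin n, ∑ l : Fin n, indQ (pt τ k) (pt τ l)) / 2 := by
    rw [J_eq, sum_dots τ (fun a => ∑ b ∈ dots τ, indQ a b)]
    congr 1
    exact Finset.sum_congr rfl fun k _ => sum_dots τ (fun b => indQ (pt τ k) b)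
  have e3 : J (dots σ) B = (∑ l : Fin n, ∑ b ∈ B, indQ (pt σ l) b) / 2 := by
    rw [J_eq, sum_dots σ (fun a => ∑ b ∈ B, indQ a b)]
  have e4 : J (dots τ) B = (∑ l : Fin n, ∑ b ∈ B, indQ (pt τ l) b) / 2 := by
    rw [J_eq, sum_dots τ (fun a => ∑ b ∈ B, indQ a b)]
  have e5 : (∑ l : Fin n, ∑ b ∈ B, indQ (pt σ l) b) - (∑ l : Fin n, ∑ b ∈ B, indQ (pt τ l) b)
      = 2 * ((B.filter (fun b => 2 * ((i : ℕ) : ℤ) < b.1 ∧ b.1 < 2 * ((j : ℕ) : ℤ) ∧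
          2 * ((σ i : ℕ) : ℤ) < b.2 ∧ b.2 < 2 * ((σ j : ℕ) : ℤ))).card : ℚ) := by
    rw [Finset.sum_comm, Finset.sum_comm (γ := Fin n)]
    rw [← Finset.sum_sub_distrib]
    rw [Finset.sum_congr rfl keyB]
    rw [← Finset.sum_filter]
    rw [Finset.sum_const]
    ring
  simp only [M]
  rw [e1, e2, e3, e4]
  linarith [keySelf, e5]
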